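/- Let T be a homeomorphism of a compact metric space X preserving a Borel probability measure μ, let 𝔛 be a Banach space, and let P : X → B(𝔛) be a Borel-measurable μ-continuous map. Then there exists a Borel set Λ̃ ⊆ X with T(Λ̃) ⊆ Λ̃ and μ(Λ̃) = 1 such that for every x ∈ Λ̃, liminf_{n→∞} ‖P(x) − P(T^n x)‖ = 0. -/

import Mathlib

open Filter Topology MeasureTheory

noncomputable section

/-- A nonnegative sequence that is frequently below every positive `ε` has liminf zero. -/
lemma liminf_eq_zero_of_frequently_lt {f : ℕ → ℝ} (h0 : ∀ n, 0 ≤ f n)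
    (h : ∀ ε : ℝ, 0 < ε → ∃ᶠ n in Filter.atTop, f n < ε) :
    Filter.atTop.liminf f = 0 := by
  rw [Filter.liminf_eq]
  have hset : {a : ℝ | ∀ᶠ n in Filter.atTop, a ≤ f n} = Set.Iic 0 := by
    ext a
    constructor
    · intro ha
      by_contra hpos
      simp only [Set.mem_Iic, not_le] at hpos
      obtain ⟨n, hn1, hn2⟩ := ((h a hpos).and_eventually ha).exists
      linarith
    · intro ha
      exact Filter.Eventually.of_forall fun n => le_trans ha (h0 n)
  rw [hset, csSup_Iic]

/-- Frequently visiting a measurable set is a measurable property. -/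
lemma measurableSet_frequently_iterate {X : Type*} [MeasurableSpace X]
    {T : X → X} (hTm : Measurable T) {S : Set X} (hS : MeasurableSet S) :
    MeasurableSet {x | ∃ᶠ n in Filter.atTop, T^[n] x ∈ S} := by
  have : {x | ∃ᶠ n in Filter.atTop, T^[n] x ∈ S}
      = ⋂ N : ℕ, ⋃ n : ℕ, ⋃ _ : N ≤ n, T^[n] ⁻¹' S := by
    ext x
    simp [Filter.frequently_atTop, Set.mem_iInter, Set.mem_iUnion]
  rw [this]
  exact MeasurableSet.iInter fun N => MeasurableSet.iUnion fun n =>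
    MeasurableSet.iUnion fun _ => (hTm.iterate n) hS

/-- **Recurrence of a `μ`-continuous operator-valued map** (Lemma 2 of the paper).  If `T` is a
homeomorphism of a compact metric space preserving a Borel probability measure `μ` and
`P : X → B(𝕏)` is Borel-measurable and `μ`-continuous (continuous on each member of a sequence
of pairwise disjoint compact sets of full measure), then there is a Borel set `Λ̃` with
`T(Λ̃) ⊆ Λ̃` and `μ(Λ̃) = 1` such that `liminf_n ‖P(x) - P(Tⁿ x)‖ = 0` for every `x ∈ Λ̃`. -/
theorem mu_continuous_recurrence {X : Type*} [MetricSpace X] [CompactSpace X]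
    [MeasurableSpace X] [BorelSpace X]
    {𝕏 : Type*} [NormedAddCommGroup 𝕏] [NormedSpace ℝ 𝕏] [CompleteSpace 𝕏]
    [MeasurableSpace (𝕏 →L[ℝ] 𝕏)] [BorelSpace (𝕏 →L[ℝ] 𝕏)]
    (T : X ≃ₜ X) (μ : Measure X) [IsProbabilityMeasure μ]
    (hT : MeasurePreserving T μ μ)
    (P : X → (𝕏 →L[ℝ] 𝕏)) (hP : Measurable P)
    (K : ℕ → Set X) (hKcpt : ∀ n, IsCompact (K n))
    (hKdisj : Pairwise (Function.onFun Disjoint K))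
    (hKfull : μ (⋃ n, K n) = 1)
    (hKcont : ∀ n, ContinuousOn P (K n)) :
    ∃ Λ : Set X, MeasurableSet Λ ∧ ⇑T '' Λ ⊆ Λ ∧ μ Λ = 1 ∧
      ∀ x ∈ Λ, Filter.atTop.liminf (fun n : ℕ => ‖P x - P ((⇑T)^[n] x)‖) = 0 := by
  have hTm : Measurable (⇑T) := T.continuous.measurable
  have hcons : Conservative (⇑T) μ := hT.conservative
  -- countable basis of X
  set B := TopologicalSpace.countableBasis X with hB
  have hBcnt : B.Countable := TopologicalSpace.countable_countableBasis X
  have hBbasis := TopologicalSpace.isBasis_countableBasis X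
  -- measurable set of `K m ∩ U`
  have hKU : ∀ (m : ℕ) (U : Set X), U ∈ B → MeasurableSet (K m ∩ U) := fun m U hU =>
    (hKcpt m).measurableSet.inter (TopologicalSpace.isOpen_of_mem_countableBasis hU).measurableSet
  -- the good set
  set G : Set X := ⋂ m : ℕ, ⋂ U ∈ B,
      ((K m ∩ U)ᶜ ∪ {x | ∃ᶠ n in Filter.atTop, (⇑T)^[n] x ∈ K m ∩ U}) with hG
  have hGmeas : MeasurableSet G := by
    refine MeasurableSet.iInter fun m => MeasurableSet.biInter hBcnt fun U hU => ?_
    exact (hKU m U hU).compl.union (measurableSet_frequently_iterate hTm (hKU m U hU))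
  set A : Set X := G ∩ ⋃ m, K m with hA
  have hAmeas : MeasurableSet A :=
    hGmeas.inter (MeasurableSet.iUnion fun m => (hKcpt m).measurableSet)
  have hGfull : μ G = 1 := by
    have hae : ∀ᵐ x ∂μ, ∀ m : ℕ, ∀ U ∈ B,
        x ∈ ((K m ∩ U)ᶜ ∪ {x | ∃ᶠ n in Filter.atTop, (⇑T)^[n] x ∈ K m ∩ U}) := by
      rw [MeasureTheory.ae_all_iff]
      intro m
      rw [MeasureTheory.ae_ball_iff hBcnt]
      intro U hU
      filter_upwards [hcons.ae_mem_imp_frequently_image_mem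
        (hKU m U hU).nullMeasurableSet] with x hx
      by_cases h : x ∈ K m ∩ U
      · exact Set.mem_union_right _ (hx h)
      · exact Set.mem_union_left _ h
    rw [← prob_compl_eq_zero_iff hGmeas]
    have hmem : ∀ᵐ x ∂μ, x ∈ G := by
      filter_upwards [hae] with x hx
      exact Set.mem_iInter.mpr fun m => Set.mem_iInter₂.mpr (hx m)
    rw [MeasureTheory.ae_iff] at hmem
    simpa [Set.compl_def] using hmem
  have hAfull : μ A = 1 := by
    rw [← prob_compl_eq_zero_iff hAmeas, hA, Set.compl_inter]
    refine le_antisymm (le_trans (measure_union_le _ _) ?_) zero_le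
    have hg : μ Gᶜ = 0 := (prob_compl_eq_zero_iff hGmeas).mpr hGfull
    have hk : μ (⋃ m, K m)ᶜ = 0 := (prob_compl_eq_zero_iff
      (MeasurableSet.iUnion fun m => (hKcpt m).measurableSet)).mpr hKfull
    rw [hg, hk, add_zero]
  -- key analytic fact: on A the liminf vanishes
  have hkey : ∀ x ∈ A, Filter.atTop.liminf (fun n : ℕ => ‖P x - P ((⇑T)^[n] x)‖) = 0 := by
    rintro x ⟨hxG, hxK⟩
    obtain ⟨m, hm⟩ := Set.mem_iUnion.mp hxK
    refine liminf_eq_zero_of_frequently_lt (fun n => norm_nonneg _) fun ε hε => ?_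
    -- continuity of P on K m at x
    have hc : ContinuousWithinAt P (K m) x := (hKcont m) x hm
    rw [Metric.continuousWithinAt_iff] at hc
    obtain ⟨δ, hδ, hδ'⟩ := hc ε hε
    -- pick a basis set U with x ∈ U ⊆ ball x δ
    obtain ⟨U, hU, hxU, hUsub⟩ :=
      hBbasis.mem_nhds_iff.mp (Metric.ball_mem_nhds x hδ)
    have hfreq : ∃ᶠ n in Filter.atTop, (⇑T)^[n] x ∈ K m ∩ U := by
      have := Set.mem_iInter.mp hxG m
      have := Set.mem_iInter.mp (Set.mem_iInter.mp this U) hU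
      rcases this with h | h
      · exact absurd ⟨hm, hxU⟩ h
      · exact h
    refine hfreq.mono fun n hn => ?_
    have h1 : dist ((⇑T)^[n] x) x < δ := hUsub hn.2
    have h2 := hδ' hn.1 h1
    rw [dist_eq_norm] at h2
    rw [norm_sub_rev]
    exact h2
  -- the invariant set
  refine ⟨⋂ k : ℕ, (⇑T)^[k] ⁻¹' A, ?_, ?_, ?_, ?_⟩
  · exact MeasurableSet.iInter fun k => (hTm.iterate k) hAmeas
  · rintro y ⟨x, hx, rfl⟩
    refine Set.mem_iInter.mpr fun k => ?_
    have := Set.mem_iInter.mp hx (k + 1)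
    simpa [Function.iterate_succ_apply] using this
  · rw [← prob_compl_eq_zero_iff (MeasurableSet.iInter fun k => (hTm.iterate k) hAmeas),
      Set.compl_iInter]
    refine le_antisymm (le_trans (measure_iUnion_le _) ?_) zero_le
    have hk : ∀ k : ℕ, μ ((⇑T)^[k] ⁻¹' A)ᶜ = 0 := fun k => by
      rw [prob_compl_eq_zero_iff ((hTm.iterate k) hAmeas),
        (hT.iterate k).measure_preimage hAmeas.nullMeasurableSet, hAfull]
    simp [hk]
  · intro x hx
    exact hkey x (by simpa using Set.mem_iInter.mp hx 0)
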